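/- Let v be any real number and let φ be a complex-valued Schwartz function on ℝ with φ(x) = 0 for all x ≤ 0. Then the function x ↦ x^v · φ(x) for x > 0, extended by 0 for x ≤ 0, is again a Schwartz function on ℝ vanishing at every x ≤ 0. -/

import Mathlib

open Real Filter Asymptotics SchwartzMap
open scoped ContDiff

noncomputable def Gf (v : ℝ) (f : ℝ → ℂ) : ℝ → ℂ :=
  fun x => if 0 < x then ((x ^ v : ℝ) : ℂ) * f x else 0

lemma Gf_nonpos {v : ℝ} {f : ℝ → ℂ} {x : ℝ} (hx : x ≤ 0) : Gf v f x = 0 := by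
  simp [Gf, not_lt.mpr hx]

lemma Gf_pos {v : ℝ} {f : ℝ → ℂ} {x : ℝ} (hx : 0 < x) :
    Gf v f x = ((x ^ v : ℝ) : ℂ) * f x := by simp [Gf, hx]

lemma Gf_norm {v : ℝ} {f : ℝ → ℂ} {x : ℝ} (hx : 0 < x) :
    ‖Gf v f x‖ = x ^ v * ‖f x‖ := by
  rw [Gf_pos hx, norm_mul, Complex.norm_real, Real.norm_eq_abs,
    abs_of_pos (Real.rpow_pos_of_pos hx v)]

/-- Key Taylor-type bound: a Schwartz function vanishing on `(-∞,0]` is `O(x^N)` near `0`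
(in fact for all `x ≥ 0`). -/
lemma powBound (N : ℕ) : ∀ (φ : SchwartzMap ℝ ℂ), (∀ x : ℝ, x ≤ 0 → φ x = 0) →
    ∃ C : ℝ, 0 ≤ C ∧ ∀ x : ℝ, 0 ≤ x → ‖φ x‖ ≤ C * x ^ N := by
  induction N with
  | zero =>
    intro φ hφ
    obtain ⟨C, hCpos, hC⟩ := φ.decay 0 0
    refine ⟨C, hCpos.le, fun x _ => ?_⟩
    simpa [norm_iteratedFDeriv_zero] using hC x
  | succ N IH =>
    intro φ hφ
    have hφ' : ∀ x : ℝ, x ≤ 0 → (SchwartzMap.derivCLM ℝ ℂ φ) x = 0 := by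
      intro x hx
      rw [SchwartzMap.derivCLM_apply]
      rcases lt_or_eq_of_le hx with hx' | hx'
      · have hev : (⇑φ) =ᶠ[nhds x] (fun _ => (0 : ℂ)) := by
          filter_upwards [Iio_mem_nhds hx'] with y hy using hφ y (le_of_lt hy)
        rw [hev.deriv_eq]; simp
      · subst hx'
        have hc : Continuous (deriv (⇑φ)) :=
          (φ.smooth ⊤).continuous_deriv (by exact_mod_cast le_top)
        have h1 : Tendsto (deriv (⇑φ)) (nhdsWithin 0 (Set.Iio 0)) (nhds (deriv (⇑φ) 0)) :=
          hc.continuousAt.tendsto.mono_left nhdsWithin_le_nhds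
        have h2 : Tendsto (deriv (⇑φ)) (nhdsWithin 0 (Set.Iio 0)) (nhds 0) := by
          apply Tendsto.congr' _ tendsto_const_nhds
          filter_upwards [self_mem_nhdsWithin] with y (hy : y < 0)
          have hev : (⇑φ) =ᶠ[nhds y] (fun _ => (0 : ℂ)) := by
            filter_upwards [Iio_mem_nhds hy] with z hz using hφ z (le_of_lt hz)
          rw [hev.deriv_eq]; simp
        exact (tendsto_nhds_unique h1 h2)
    obtain ⟨C, hC0, hC⟩ := IH (SchwartzMap.derivCLM ℝ ℂ φ) hφ'
    refine ⟨C, hC0, fun x hx => ?_⟩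
    have key : ‖φ x - φ 0‖ ≤ C * x ^ N * ‖x - 0‖ := by
      apply Convex.norm_image_sub_le_of_norm_hasDerivWithin_le
        (f' := fun t => deriv (⇑φ) t) (s := Set.Icc 0 x)
      · intro t _
        exact (φ.differentiable.differentiableAt.hasDerivAt).hasDerivWithinAt
      · intro t ht
        have h1 : ‖deriv (⇑φ) t‖ ≤ C * t ^ N := by
          have := hC t ht.1
          rwa [SchwartzMap.derivCLM_apply] at this
        refine h1.trans ?_
        have : t ^ N ≤ x ^ N := pow_le_pow_left₀ ht.1 ht.2 N
        nlinarith
      · exact convex_Icc 0 x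
      · exact Set.left_mem_Icc.mpr hx
      · exact Set.right_mem_Icc.mpr hx
    rw [hφ 0 le_rfl, sub_zero] at key
    calc ‖φ x‖ ≤ C * x ^ N * ‖x - 0‖ := key
      _ = C * x ^ (N + 1) := by
          rw [sub_zero, Real.norm_eq_abs, abs_of_nonneg hx]; ring

lemma derivCLM_vanish {φ : SchwartzMap ℝ ℂ} (hφ : ∀ x : ℝ, x ≤ 0 → φ x = 0) :
    ∀ x : ℝ, x ≤ 0 → (SchwartzMap.derivCLM ℝ ℂ φ) x = 0 := by
  -- re-derive (same proof as embedded above); use powBound trick through a helper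
  intro x hx
  rw [SchwartzMap.derivCLM_apply]
  rcases lt_or_eq_of_le hx with hx' | hx'
  · have hev : (⇑φ) =ᶠ[nhds x] (fun _ => (0 : ℂ)) := by
      filter_upwards [Iio_mem_nhds hx'] with y hy using hφ y (le_of_lt hy)
    rw [hev.deriv_eq]; simp
  · subst hx'
    have hc : Continuous (deriv (⇑φ)) := (φ.smooth ⊤).continuous_deriv (by exact_mod_cast le_top)
    have h1 : Tendsto (deriv (⇑φ)) (nhdsWithin 0 (Set.Iio 0)) (nhds (deriv (⇑φ) 0)) :=
      hc.continuousAt.tendsto.mono_left nhdsWithin_le_nhds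
    have h2 : Tendsto (deriv (⇑φ)) (nhdsWithin 0 (Set.Iio 0)) (nhds 0) := by
      apply Tendsto.congr' _ tendsto_const_nhds
      filter_upwards [self_mem_nhdsWithin] with y (hy : y < 0)
      have hev : (⇑φ) =ᶠ[nhds y] (fun _ => (0 : ℂ)) := by
        filter_upwards [Iio_mem_nhds hy] with z hz using hφ z (le_of_lt hz)
      rw [hev.deriv_eq]; simp
    exact tendsto_nhds_unique h1 h2

lemma hasDerivAt_Gf (v : ℝ) (φ : SchwartzMap ℝ ℂ) (hφ : ∀ x : ℝ, x ≤ 0 → φ x = 0)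
    (x : ℝ) :
    HasDerivAt (Gf v ⇑φ)
      ((v : ℂ) * Gf (v - 1) ⇑φ x + Gf v ⇑(SchwartzMap.derivCLM ℝ ℂ φ) x) x := by
  rcases lt_trichotomy x 0 with hx | hx | hx
  · -- x < 0
    rw [Gf_nonpos hx.le, Gf_nonpos hx.le, mul_zero, add_zero]
    have hev : Gf v ⇑φ =ᶠ[nhds x] (fun _ => (0 : ℂ)) := by
      filter_upwards [Iio_mem_nhds hx] with y (hy : y < 0) using Gf_nonpos hy.le
    exact (hasDerivAt_const x (0 : ℂ)).congr_of_eventuallyEq hev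
  · -- x = 0
    subst hx
    rw [Gf_nonpos le_rfl, Gf_nonpos le_rfl, mul_zero, add_zero]
    rw [hasDerivAt_iff_isLittleO]
    simp only [Gf_nonpos (le_refl (0 : ℝ)), sub_zero, smul_zero]
    have hsq : (fun y : ℝ => y ^ 2) =o[nhds (0 : ℝ)] fun y => y :=
      isLittleO_pow_id one_lt_two
    have hbig : (fun y => Gf v (⇑φ) y) =O[nhds (0 : ℝ)] fun y => y ^ 2 := by
      set m : ℕ := ⌈2 - v⌉₊ with hm
      have hvm : (2 : ℝ) ≤ v + m := by
        have := Nat.le_ceil (2 - v)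
        rw [← hm] at this; linarith
      obtain ⟨C, hC0, hC⟩ := powBound m φ hφ
      rw [isBigO_iff]
      refine ⟨C, ?_⟩
      filter_upwards [Ioo_mem_nhds (by norm_num : (-1 : ℝ) < 0) (by norm_num : (0 : ℝ) < 1)]
        with y hy
      rcases le_or_gt y 0 with hy0 | hy0
      · rw [Gf_nonpos hy0, norm_zero]
        positivity
      · rw [Gf_norm hy0]
        have h1 : ‖φ y‖ ≤ C * y ^ m := hC y hy0.le
        have h2 : y ^ v * ‖φ y‖ ≤ C * y ^ (v + (m : ℝ)) := by
          have := mul_le_mul_of_nonneg_left h1 (Real.rpow_pos_of_pos hy0 v).le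
          have hym : (y : ℝ) ^ (m : ℕ) = y ^ ((m : ℕ) : ℝ) := (Real.rpow_natCast y m).symm
          calc y ^ v * ‖φ y‖ ≤ y ^ v * (C * y ^ m) := this
            _ = C * (y ^ v * y ^ ((m : ℕ) : ℝ)) := by rw [hym]; ring
            _ = C * y ^ (v + (m : ℝ)) := by rw [← Real.rpow_add hy0]
        refine h2.trans ?_
        have h3 : y ^ (v + (m : ℝ)) ≤ y ^ ((2 : ℕ) : ℝ) := by
          apply Real.rpow_le_rpow_of_exponent_ge hy0 hy.2.le
          exact_mod_cast hvm
        rw [Real.rpow_natCast] at h3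
        have : ‖y ^ 2‖ = y ^ 2 := by
          rw [Real.norm_eq_abs, abs_of_nonneg (by positivity)]
        rw [this]
        nlinarith
    exact hbig.trans_isLittleO hsq
  · -- x > 0
    have hev : (fun y => ((y ^ v : ℝ) : ℂ) * φ y) =ᶠ[nhds x] Gf v ⇑φ := by
      filter_upwards [Ioi_mem_nhds hx] with y (hy : 0 < y)
      rw [Gf_pos hy]
    have h1 : HasDerivAt (fun y : ℝ => ((y ^ v : ℝ) : ℂ)) ((v * x ^ (v - 1) : ℝ) : ℂ) x :=
      (Real.hasDerivAt_rpow_const (Or.inl hx.ne')).ofReal_comp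
    have h2 : HasDerivAt (⇑φ) (deriv (⇑φ) x) x :=
      φ.differentiable.differentiableAt.hasDerivAt
    have h3 := h1.mul h2
    have h4 := h3.congr_of_eventuallyEq hev.symm
    refine h4.congr_deriv ?_
    rw [Gf_pos hx, Gf_pos hx, SchwartzMap.derivCLM_apply]
    push_cast
    ring

lemma deriv_Gf (v : ℝ) (φ : SchwartzMap ℝ ℂ) (hφ : ∀ x : ℝ, x ≤ 0 → φ x = 0) :
    deriv (Gf v ⇑φ) =
      fun x => (v : ℂ) * Gf (v - 1) ⇑φ x + Gf v ⇑(SchwartzMap.derivCLM ℝ ℂ φ) x :=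
  funext fun x => (hasDerivAt_Gf v φ hφ x).deriv

lemma contDiff_Gf : ∀ (n : ℕ) (v : ℝ) (φ : SchwartzMap ℝ ℂ),
    (∀ x : ℝ, x ≤ 0 → φ x = 0) → ContDiff ℝ n (Gf v ⇑φ) := by
  intro n
  induction n with
  | zero =>
    intro v φ hφ
    rw [show ((0 : ℕ) : WithTop ℕ∞) = 0 by rfl, contDiff_zero]
    exact Differentiable.continuous fun x => (hasDerivAt_Gf v φ hφ x).differentiableAt
  | succ n IH =>
    intro v φ hφ
    have hcast : ((n + 1 : ℕ) : WithTop ℕ∞) = (n : WithTop ℕ∞) + 1 := by push_cast; rfl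
    rw [hcast, contDiff_succ_iff_deriv]
    refine ⟨fun x => (hasDerivAt_Gf v φ hφ x).differentiableAt, by simp, ?_⟩
    rw [deriv_Gf v φ hφ]
    exact (contDiff_const.mul (IH (v - 1) φ hφ)).add
      (IH v (SchwartzMap.derivCLM ℝ ℂ φ) (derivCLM_vanish hφ))

lemma smooth_Gf (v : ℝ) (φ : SchwartzMap ℝ ℂ) (hφ : ∀ x : ℝ, x ≤ 0 → φ x = 0) :
    ContDiff ℝ ∞ (Gf v ⇑φ) :=
  contDiff_infty.mpr fun n => contDiff_Gf n v φ hφ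

lemma itd_comb {n : ℕ} (c : ℂ) (f g : ℝ → ℂ) (hf : ContDiff ℝ n f) (hg : ContDiff ℝ n g)
    (x : ℝ) :
    iteratedDeriv n (fun y => c * f y + g y) x
      = c * iteratedDeriv n f x + iteratedDeriv n g x := by
  have h1 : iteratedDeriv n ((fun y => c * f y) + g) x
      = iteratedDeriv n (fun y => c * f y) x + iteratedDeriv n g x := by
    rw [← iteratedDerivWithin_univ, ← iteratedDerivWithin_univ, ← iteratedDerivWithin_univ]
    exact iteratedDerivWithin_add (Set.mem_univ x) uniqueDiffOn_univ
      ((hf.const_smul c).contDiffWithinAt) hg.contDiffWithinAt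
  have h2 : iteratedDeriv n (fun y => c * f y) x = c * iteratedDeriv n f x := by
    have h3 : iteratedDeriv n (c • f) x = c • iteratedDeriv n f x := by
      rw [← iteratedDerivWithin_univ, ← iteratedDerivWithin_univ]
      exact iteratedDerivWithin_const_smul (Set.mem_univ x) uniqueDiffOn_univ c hf.contDiffWithinAt
    simpa [Pi.smul_def, smul_eq_mul] using h3
  calc iteratedDeriv n (fun y => c * f y + g y) x
      = iteratedDeriv n ((fun y => c * f y) + g) x := rfl
    _ = c * iteratedDeriv n f x + iteratedDeriv n g x := by rw [h1, h2]

lemma decay_Gf : ∀ (n : ℕ) (v : ℝ) (φ : SchwartzMap ℝ ℂ),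
    (∀ x : ℝ, x ≤ 0 → φ x = 0) → ∀ k : ℕ,
    ∃ C : ℝ, ∀ x : ℝ, ‖x‖ ^ k * ‖iteratedDeriv n (Gf v ⇑φ) x‖ ≤ C := by
  intro n
  induction n with
  | zero =>
    intro v φ hφ k
    set m : ℕ := ⌈-v⌉₊ with hm
    set p : ℕ := ⌈v⌉₊ with hp
    obtain ⟨C1, hC10, hC1⟩ := powBound m φ hφ
    obtain ⟨C2, hC20, hC2⟩ := φ.decay (k + p) 0
    refine ⟨C1 + C2, fun x => ?_⟩
    rw [iteratedDeriv_zero]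
    rcases le_or_gt x 0 with hx | hx
    · rw [Gf_nonpos hx, norm_zero, mul_zero]
      positivity
    · rw [Gf_norm hx]
      rcases le_or_gt x 1 with hx1 | hx1
      · have h1 : ‖x‖ ^ k ≤ 1 := by
          rw [Real.norm_eq_abs, abs_of_pos hx]
          exact pow_le_one₀ hx.le hx1
        have h2 : x ^ v * ‖φ x‖ ≤ C1 * x ^ (v + (m : ℝ)) := by
          have := mul_le_mul_of_nonneg_left (hC1 x hx.le) (Real.rpow_pos_of_pos hx v).le
          have hxm : (x : ℝ) ^ (m : ℕ) = x ^ ((m : ℕ) : ℝ) := (Real.rpow_natCast x m).symm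
          calc x ^ v * ‖φ x‖ ≤ x ^ v * (C1 * x ^ m) := this
            _ = C1 * (x ^ v * x ^ ((m : ℕ) : ℝ)) := by rw [hxm]; ring
            _ = C1 * x ^ (v + (m : ℝ)) := by rw [← Real.rpow_add hx]
        have h3 : x ^ (v + (m : ℝ)) ≤ 1 := by
          apply Real.rpow_le_one hx.le hx1
          have := Nat.le_ceil (-v)
          rw [← hm] at this; linarith
        have h4 : x ^ v * ‖φ x‖ ≤ C1 := by nlinarith
        have h5 : 0 ≤ x ^ v * ‖φ x‖ := by positivity
        calc ‖x‖ ^ k * (x ^ v * ‖φ x‖) ≤ 1 * C1 := by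
              apply mul_le_mul h1 h4 h5 zero_le_one
          _ ≤ C1 + C2 := by linarith
      · have hxv : x ^ v ≤ x ^ (p : ℕ) := by
          have : x ^ v ≤ x ^ ((p : ℕ) : ℝ) :=
            Real.rpow_le_rpow_of_exponent_le hx1.le (Nat.le_ceil v)
          rwa [Real.rpow_natCast] at this
        have hφx : ‖x‖ ^ (k + p) * ‖φ x‖ ≤ C2 := by
          have := hC2 x
          rwa [norm_iteratedFDeriv_zero] at this
        have hxn : ‖x‖ = x := by rw [Real.norm_eq_abs, abs_of_pos hx]
        have key : ‖x‖ ^ k * (x ^ v * ‖φ x‖) ≤ ‖x‖ ^ (k + p) * ‖φ x‖ := by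
          rw [hxn, pow_add]
          have h0 : (0 : ℝ) ≤ x ^ k := by positivity
          have h00 : (0 : ℝ) ≤ ‖φ x‖ := norm_nonneg _
          calc x ^ k * (x ^ v * ‖φ x‖) = (x ^ v * ‖φ x‖) * x ^ k := by ring
            _ ≤ (x ^ (p : ℕ) * ‖φ x‖) * x ^ k := by
                apply mul_le_mul_of_nonneg_right _ h0
                exact mul_le_mul_of_nonneg_right hxv h00
            _ = x ^ k * x ^ (p : ℕ) * ‖φ x‖ := by ring
        refine key.trans (hφx.trans ?_)
        linarith
  | succ n IH =>
    intro v φ hφ k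
    have hφ' := derivCLM_vanish hφ
    obtain ⟨CA, hCA⟩ := IH (v - 1) φ hφ k
    obtain ⟨CB, hCB⟩ := IH v (SchwartzMap.derivCLM ℝ ℂ φ) hφ' k
    refine ⟨‖(v : ℂ)‖ * CA + CB, fun x => ?_⟩
    rw [iteratedDeriv_succ', deriv_Gf v φ hφ]
    rw [itd_comb (v : ℂ) _ _ (contDiff_Gf n (v - 1) φ hφ)
      (contDiff_Gf n v (SchwartzMap.derivCLM ℝ ℂ φ) hφ') x]
    have htri : ‖(v : ℂ) * iteratedDeriv n (Gf (v - 1) ⇑φ) x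
        + iteratedDeriv n (Gf v ⇑(SchwartzMap.derivCLM ℝ ℂ φ)) x‖
        ≤ ‖(v : ℂ)‖ * ‖iteratedDeriv n (Gf (v - 1) ⇑φ) x‖
          + ‖iteratedDeriv n (Gf v ⇑(SchwartzMap.derivCLM ℝ ℂ φ)) x‖ := by
      refine (norm_add_le _ _).trans ?_
      rw [norm_mul]
    have hk : (0 : ℝ) ≤ ‖x‖ ^ k := by positivity
    calc ‖x‖ ^ k * ‖(v : ℂ) * iteratedDeriv n (Gf (v - 1) ⇑φ) x
        + iteratedDeriv n (Gf v ⇑(SchwartzMap.derivCLM ℝ ℂ φ)) x‖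
        ≤ ‖x‖ ^ k * (‖(v : ℂ)‖ * ‖iteratedDeriv n (Gf (v - 1) ⇑φ) x‖
          + ‖iteratedDeriv n (Gf v ⇑(SchwartzMap.derivCLM ℝ ℂ φ)) x‖) :=
          mul_le_mul_of_nonneg_left htri hk
      _ = ‖(v : ℂ)‖ * (‖x‖ ^ k * ‖iteratedDeriv n (Gf (v - 1) ⇑φ) x‖)
          + ‖x‖ ^ k * ‖iteratedDeriv n (Gf v ⇑(SchwartzMap.derivCLM ℝ ℂ φ)) x‖ := by ring
      _ ≤ ‖(v : ℂ)‖ * CA + CB := by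
          have h1 := hCA x
          have h2 := hCB x
          have h3 : (0 : ℝ) ≤ ‖(v : ℂ)‖ := norm_nonneg _
          nlinarith [mul_le_mul_of_nonneg_left h1 h3]

/-- For any `v : ℝ` and any Schwartz function `φ` on `ℝ` vanishing on `(-∞,0]`,
the function `x ↦ x^v · φ x` for `x > 0`, extended by `0` for `x ≤ 0`, is again a Schwartz
function vanishing on `(-∞,0]`. -/
theorem schwartz_rpow_mul_of_vanishing_nonpos (v : ℝ) (φ : SchwartzMap ℝ ℂ)
    (hφ : ∀ x : ℝ, x ≤ 0 → φ x = 0) :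
    ∃ ψ : SchwartzMap ℝ ℂ,
      (∀ x : ℝ, x ≤ 0 → ψ x = 0) ∧ ∀ x : ℝ, 0 < x → ψ x = ((x ^ v : ℝ) : ℂ) * φ x := by
  refine ⟨⟨Gf v ⇑φ, ?_, ?_⟩, ?_, ?_⟩
  · exact smooth_Gf v φ hφ
  · intro k n
    obtain ⟨C, hC⟩ := decay_Gf n v φ hφ k
    refine ⟨C, fun x => ?_⟩
    rw [norm_iteratedFDeriv_eq_norm_iteratedDeriv]
    exact hC x
  · intro x hx
    exact Gf_nonpos hx
  · intro x hx
    exact Gf_pos hx
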